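/- Let K : ℕ → ℤ be the sequence of Kontsevich numbers, defined by K(1) = 1 and, for d ≥ 2, K(d) = Σ_{d₁+d₂=d, d₁≥1, d₂≥1} K(d₁)·K(d₂)·( d₁²·d₂²·C(3d−4, 3d₁−2) − d₁³·d₂·C(3d−4, 3d₁−1) ). Then there exists a constant C > 0 such that for all n ≥ 1, log K(n) ≥ 3·n·log n − C·n. -/

import Mathlib

private lemma pair_core (x y A B C : ℤ) (hx : 1 ≤ x) (hy : 1 ≤ y) (hB : 0 ≤ B)
    (r1 : B * (3*x - 2) = A * (3*y - 1)) (r2 : C * (3*x - 1) = B * (3*y - 2)) :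
    0 ≤ (x^2*y^2*B - x^3*y*C) + (y^2*x^2*B - y^3*x*A) := by
  have hP : 0 ≤ 2*x*y*(3*x-1)*(3*y-1) - x^2*(3*y-1)*(3*y-2) - y^2*(3*x-1)*(3*x-2) := by
    nlinarith [mul_nonneg (sq_nonneg x) (sub_nonneg.2 hy), mul_nonneg (sq_nonneg y) (sub_nonneg.2 hx), sq_nonneg (x+y)]
  have hpos : (0:ℤ) < (3*x-1)*(3*y-1) := by nlinarith
  have hprod : 0 ≤ (2*x*y*B - x^2*C - y^2*A) * ((3*x-1)*(3*y-1)) := by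
    have expand : (2*x*y*B - x^2*C - y^2*A) * ((3*x-1)*(3*y-1))
        = B * (2*x*y*(3*x-1)*(3*y-1) - x^2*(3*y-1)*(3*y-2) - y^2*(3*x-1)*(3*x-2)) := by
      linear_combination (-(x^2)*(3*y-1)) * r2 + (y^2*(3*x-1)) * r1
    rw [expand]; exact mul_nonneg hB hP
  have key : 0 ≤ 2*x*y*B - x^2*C - y^2*A := (mul_nonneg_iff_of_pos_right hpos).mp hprod
  have hxy : (0:ℤ) ≤ x*y := by positivity
  nlinarith [mul_nonneg hxy key]

private lemma pair_nonneg (a b : ℕ) (ha : 0 < a) (hb : 0 < b) :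
    0 ≤ ((a : ℤ)^2 * (b : ℤ)^2 * (Nat.choose (3*(a+b) - 4) (3*a - 2) : ℤ)
            - (a : ℤ)^3 * (b : ℤ) * (Nat.choose (3*(a+b) - 4) (3*a - 1) : ℤ))
        + ((b : ℤ)^2 * (a : ℤ)^2 * (Nat.choose (3*(a+b) - 4) (3*b - 2) : ℤ)
            - (b : ℤ)^3 * (a : ℤ) * (Nat.choose (3*(a+b) - 4) (3*b - 1) : ℤ)) := by
  obtain ⟨a', rfl⟩ : ∃ a', a = a' + 1 := ⟨a - 1, by omega⟩
  obtain ⟨b', rfl⟩ : ∃ b', b = b' + 1 := ⟨b - 1, by omega⟩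
  have e0 : 3*((a'+1)+(b'+1)) - 4 = 3*a' + 3*b' + 2 := by omega
  have e1 : 3*(a'+1) - 2 = 3*a' + 1 := by omega
  have e2 : 3*(a'+1) - 1 = 3*a' + 2 := by omega
  have e3 : 3*(b'+1) - 2 = 3*b' + 1 := by omega
  have e4 : 3*(b'+1) - 1 = 3*b' + 2 := by omega
  rw [e0, e1, e2, e3, e4]
  have hs1 : Nat.choose (3*a'+3*b'+2) (3*b'+1) = Nat.choose (3*a'+3*b'+2) (3*a'+1) := by
    have := Nat.choose_symm (n := 3*a'+3*b'+2) (k := 3*a'+1) (by omega)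
    rwa [show 3*a'+3*b'+2 - (3*a'+1) = 3*b'+1 by omega] at this
  have hs2 : Nat.choose (3*a'+3*b'+2) (3*b'+2) = Nat.choose (3*a'+3*b'+2) (3*a') := by
    have := Nat.choose_symm (n := 3*a'+3*b'+2) (k := 3*a') (by omega)
    rwa [show 3*a'+3*b'+2 - 3*a' = 3*b'+2 by omega] at this
  rw [hs1, hs2]
  have r1n := Nat.choose_succ_right_eq (3*a'+3*b'+2) (3*a')
  rw [show 3*a'+3*b'+2 - 3*a' = 3*b'+2 by omega] at r1n
  have r2n := Nat.choose_succ_right_eq (3*a'+3*b'+2) (3*a'+1)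
  rw [show 3*a'+3*b'+2 - (3*a'+1) = 3*b'+1 by omega] at r2n
  have r1 : (Nat.choose (3*a'+3*b'+2) (3*a'+1) : ℤ) * (3*((a':ℤ)+1) - 2)
      = (Nat.choose (3*a'+3*b'+2) (3*a') : ℤ) * (3*((b':ℤ)+1) - 1) := by
    have := congrArg (Nat.cast : ℕ → ℤ) r1n
    push_cast at this ⊢
    linarith
  have r2 : (Nat.choose (3*a'+3*b'+2) (3*a'+2) : ℤ) * (3*((a':ℤ)+1) - 1)
      = (Nat.choose (3*a'+3*b'+2) (3*a'+1) : ℤ) * (3*((b':ℤ)+1) - 2) := by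
    have := congrArg (Nat.cast : ℕ → ℤ) r2n
    rw [show 3*a'+1+1 = 3*a'+2 by omega] at this
    push_cast at this ⊢
    linarith
  have main := pair_core ((a':ℤ)+1) ((b':ℤ)+1)
    (Nat.choose (3*a'+3*b'+2) (3*a') : ℤ) (Nat.choose (3*a'+3*b'+2) (3*a'+1) : ℤ)
    (Nat.choose (3*a'+3*b'+2) (3*a'+2) : ℤ)
    (by linarith [Int.natCast_nonneg a']) (by linarith [Int.natCast_nonneg b'])
    (by positivity) r1 r2
  push_cast
  nlinarith [main]

private lemma pair_one (b : ℕ) (hb : 0 < b) :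
    2 * ((((1:ℕ) : ℤ)^2 * (b : ℤ)^2 * (Nat.choose (3*(1+b) - 4) (3*1 - 2) : ℤ)
            - ((1:ℕ) : ℤ)^3 * (b : ℤ) * (Nat.choose (3*(1+b) - 4) (3*1 - 1) : ℤ))
        + ((b : ℤ)^2 * ((1:ℕ) : ℤ)^2 * (Nat.choose (3*(1+b) - 4) (3*b - 2) : ℤ)
            - (b : ℤ)^3 * ((1:ℕ) : ℤ) * (Nat.choose (3*(1+b) - 4) (3*b - 1) : ℤ)))
      = (b:ℤ) * ((b:ℤ)^2 + 5*(b:ℤ) - 2) := by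
  obtain ⟨b', rfl⟩ : ∃ b', b = b' + 1 := ⟨b - 1, by omega⟩
  have e0 : 3*(1+(b'+1)) - 4 = 3*b' + 2 := by omega
  have e1 : 3*1 - 2 = 1 := by omega
  have e2 : 3*1 - 1 = 2 := by omega
  have e3 : 3*(b'+1) - 2 = 3*b' + 1 := by omega
  have e4 : 3*(b'+1) - 1 = 3*b' + 2 := by omega
  rw [e0, e1, e2, e3, e4]
  have hc1 : Nat.choose (3*b'+2) 1 = 3*b' + 2 := Nat.choose_one_right _
  have hc2 : (Nat.choose (3*b'+2) 2 : ℤ) * 2 = ((3*b'+2 : ℕ) : ℤ) * ((3*b'+1 : ℕ) : ℤ) := by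
    have := Nat.choose_succ_right_eq (3*b'+2) 1
    rw [Nat.choose_one_right, show 3*b'+2-1 = 3*b'+1 by omega] at this
    exact_mod_cast congrArg (Nat.cast : ℕ → ℤ) this
  have hs1 : Nat.choose (3*b'+2) (3*b'+1) = 3*b' + 2 := by
    have := Nat.choose_symm (n := 3*b'+2) (k := 1) (by omega)
    rw [show 3*b'+2 - 1 = 3*b'+1 by omega] at this
    rw [this, Nat.choose_one_right]
  have hs2 : Nat.choose (3*b'+2) (3*b'+2) = 1 := Nat.choose_self _
  rw [hc1, hs1, hs2]
  push_cast at hc2 ⊢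
  linear_combination (-((b':ℤ)+1)) * hc2

private lemma term_nonneg (K : ℕ → ℤ) (d a : ℕ) (ha : 0 < a) (had : a < d)
    (hKa : 0 < K a) (hKb : 0 < K (d - a)) :
    0 ≤ (K a * K (d-a) * ((a:ℤ)^2*(((d-a:ℕ)):ℤ)^2*(Nat.choose (3*d-4) (3*a-2):ℤ)
          - (a:ℤ)^3*(((d-a:ℕ)):ℤ)*(Nat.choose (3*d-4) (3*a-1):ℤ)))
      + (K (d-a) * K (d-(d-a)) * ((((d-a:ℕ)):ℤ)^2*(((d-(d-a):ℕ)):ℤ)^2*(Nat.choose (3*d-4) (3*(d-a)-2):ℤ)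
          - (((d-a:ℕ)):ℤ)^3*(((d-(d-a):ℕ)):ℤ)*(Nat.choose (3*d-4) (3*(d-a)-1):ℤ))) := by
  obtain ⟨b, hb⟩ : ∃ b, d - a = b := ⟨d - a, rfl⟩
  have hb0 : 0 < b := by omega
  have hba : d - b = a := by omega
  have hd4 : 3*d - 4 = 3*(a+b) - 4 := by omega
  rw [hb] at hKb
  rw [hb, hba, hd4]
  have hS := pair_nonneg a b ha hb0
  nlinarith [mul_nonneg (mul_pos hKa hKb).le hS]

private lemma term_one (K : ℕ → ℤ) (d : ℕ) (hd : 2 ≤ d) (hK1 : K 1 = 1) (hKb : 0 < K (d-1)) :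
    ((d-1:ℕ):ℤ) * (d:ℤ)^2 * K (d-1) ≤
    2 * ((K 1 * K (d-1) * ((((1:ℕ)):ℤ)^2*(((d-1:ℕ)):ℤ)^2*(Nat.choose (3*d-4) (3*1-2):ℤ)
          - (((1:ℕ)):ℤ)^3*(((d-1:ℕ)):ℤ)*(Nat.choose (3*d-4) (3*1-1):ℤ)))
      + (K (d-1) * K (d-(d-1)) * ((((d-1:ℕ)):ℤ)^2*(((d-(d-1):ℕ)):ℤ)^2*(Nat.choose (3*d-4) (3*(d-1)-2):ℤ)
          - (((d-1:ℕ)):ℤ)^3*(((d-(d-1):ℕ)):ℤ)*(Nat.choose (3*d-4) (3*(d-1)-1):ℤ)))) := by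
  obtain ⟨b, hb⟩ : ∃ b, d - 1 = b := ⟨d - 1, rfl⟩
  have hb0 : 0 < b := by omega
  have hba : d - b = 1 := by omega
  have hd4 : 3*d - 4 = 3*(1+b) - 4 := by omega
  have hdb : (d:ℤ) = (b:ℤ) + 1 := by push_cast [show d = b + 1 by omega]; ring
  rw [hb, hba, hd4, hK1]
  rw [hb] at hKb
  have hP := pair_one b hb0
  have hb1 : (1:ℤ) ≤ (b:ℤ) := by exact_mod_cast hb0
  have h2 : 2 * ((1 : ℤ) * K b *
          ((((1:ℕ)):ℤ)^2*((b:ℕ):ℤ)^2*(Nat.choose (3*(1+b)-4) (3*1-2):ℤ)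
            - (((1:ℕ)):ℤ)^3*((b:ℕ):ℤ)*(Nat.choose (3*(1+b)-4) (3*1-1):ℤ))
        + K b * 1 *
          (((b:ℕ):ℤ)^2*(((1:ℕ)):ℤ)^2*(Nat.choose (3*(1+b)-4) (3*b-2):ℤ)
            - ((b:ℕ):ℤ)^3*(((1:ℕ)):ℤ)*(Nat.choose (3*(1+b)-4) (3*b-1):ℤ)))
      = K b * ((b:ℤ) * ((b:ℤ)^2 + 5*(b:ℤ) - 2)) := by
    linear_combination (K b) * hP
  rw [hdb, h2]
  nlinarith [mul_nonneg hKb.le (show (0:ℤ) ≤ 3*(b:ℤ)*((b:ℤ)-1) by nlinarith), hKb]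

private lemma kontsevich_pos_fact (K : ℕ → ℤ) (hK1 : K 1 = 1)
    (hKrec : ∀ d : ℕ, 2 ≤ d →
      K d = ∑ d₁ ∈ Finset.Ioo 0 d,
        K d₁ * K (d - d₁) *
          ((d₁ : ℤ)^2 * ((d - d₁ : ℕ) : ℤ)^2 * (Nat.choose (3*d - 4) (3*d₁ - 2) : ℤ)
            - (d₁ : ℤ)^3 * ((d - d₁ : ℕ) : ℤ) * (Nat.choose (3*d - 4) (3*d₁ - 1) : ℤ))) :
    ∀ d : ℕ, 1 ≤ d → 0 < K d ∧ ((d.factorial : ℤ))^3 ≤ 4^d * K d := by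
  intro d
  induction d using Nat.strong_induction_on with
  | _ d IH =>
  intro hd1
  rcases eq_or_lt_of_le hd1 with h1 | h2
  · rw [← h1, hK1]
    norm_num
  rcases eq_or_lt_of_le (show 2 ≤ d from h2) with h2' | h3
  · -- d = 2
    have hK2 : K 2 = 1 := by
      rw [hKrec 2 (by omega), show Finset.Ioo 0 2 = {1} from rfl]
      simp [hK1]
    rw [← h2', hK2]
    norm_num [Nat.factorial]
  -- now 3 ≤ d
  have hd2 : 2 ≤ d := by omega
  have hsum := hKrec d hd2
  set F : ℕ → ℤ := fun d₁ => K d₁ * K (d - d₁) *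
          ((d₁ : ℤ)^2 * ((d - d₁ : ℕ) : ℤ)^2 * (Nat.choose (3*d - 4) (3*d₁ - 2) : ℤ)
            - (d₁ : ℤ)^3 * ((d - d₁ : ℕ) : ℤ) * (Nat.choose (3*d - 4) (3*d₁ - 1) : ℤ)) with hF
  have hKpos : ∀ m, 0 < m → m < d → 0 < K m := fun m hm hmd => (IH m hmd hm).1
  have hrefl : ∑ x ∈ Finset.Ioo 0 d, F x = ∑ x ∈ Finset.Ioo 0 d, F (d - x) := by
    apply Finset.sum_nbij' (fun x => d - x) (fun x => d - x)
    · intro x hx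
      simp only [Finset.mem_Ioo] at hx ⊢
      omega
    · intro x hx
      simp only [Finset.mem_Ioo] at hx ⊢
      omega
    · intro x hx
      simp only [Finset.mem_Ioo] at hx
      omega
    · intro x hx
      simp only [Finset.mem_Ioo] at hx
      omega
    · intro x hx
      simp only [Finset.mem_Ioo] at hx
      rw [Nat.sub_sub_self (le_of_lt hx.2)]
  have h2K : 2 * K d = ∑ x ∈ Finset.Ioo 0 d, (F x + F (d - x)) := by
    rw [Finset.sum_add_distrib, ← hrefl, ← hsum]
    ring
  have hnn : ∀ x ∈ Finset.Ioo 0 d, 0 ≤ F x + F (d - x) := by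
    intro x hx
    simp only [Finset.mem_Ioo] at hx
    have hx2 : x < d := hx.2
    exact term_nonneg K d x hx.1 hx2 (hKpos x hx.1 hx2) (hKpos (d - x) (by omega) (by omega))
  have hKb : 0 < K (d - 1) := hKpos (d - 1) (by omega) (by omega)
  have hone : ((d-1:ℕ):ℤ) * (d:ℤ)^2 * K (d-1) ≤ 2 * (F 1 + F (d - 1)) :=
    term_one K d hd2 hK1 hKb
  -- sum over subset {1, d-1}
  have hsub : ({1, d-1} : Finset ℕ) ⊆ Finset.Ioo 0 d := by
    intro x hx
    simp only [Finset.mem_insert, Finset.mem_singleton] at hx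
    simp only [Finset.mem_Ioo]
    omega
  have hne : (1:ℕ) ≠ d - 1 := by omega
  have hpairsum : ∑ x ∈ ({1, d-1} : Finset ℕ), (F x + F (d - x)) ≤ ∑ x ∈ Finset.Ioo 0 d, (F x + F (d - x)) :=
    Finset.sum_le_sum_of_subset_of_nonneg hsub (fun i hi _ => hnn i hi)
  have hps : ∑ x ∈ ({1, d-1} : Finset ℕ), (F x + F (d - x)) = 2 * (F 1 + F (d - 1)) := by
    rw [Finset.sum_pair hne]
    have hdd1 : d - (d - 1) = 1 := by omega
    rw [hdd1]
    ring
  have hgrow : ((d-1:ℕ):ℤ) * (d:ℤ)^2 * K (d-1) ≤ 2 * K d := by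
    rw [h2K]
    calc ((d-1:ℕ):ℤ) * (d:ℤ)^2 * K (d-1) ≤ 2 * (F 1 + F (d - 1)) := hone
      _ = ∑ x ∈ ({1, d-1} : Finset ℕ), (F x + F (d - x)) := hps.symm
      _ ≤ ∑ x ∈ Finset.Ioo 0 d, (F x + F (d - x)) := hpairsum
  -- positivity
  have hd1c : (1:ℤ) ≤ ((d-1:ℕ):ℤ) := by exact_mod_cast (by omega : 1 ≤ d - 1)
  have hdc : (3:ℤ) ≤ (d:ℤ) := by exact_mod_cast h3
  have hKdpos : 0 < K d := by
    nlinarith [mul_pos (mul_pos (show (0:ℤ) < ((d-1:ℕ):ℤ) by linarith)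
      (show (0:ℤ) < (d:ℤ)^2 by positivity)) hKb, hgrow]
  refine ⟨hKdpos, ?_⟩
  -- factorial bound
  obtain ⟨hKbpos, hIH⟩ := IH (d-1) (by omega) (by omega)
  have hfac : (d.factorial : ℤ) = (d:ℤ) * ((d-1).factorial : ℤ) := by
    rw [← Nat.mul_factorial_pred (by omega : d ≠ 0)]
    push_cast
    ring
  have hpow : (4:ℤ)^d = 4 * 4^(d-1) := by
    conv_lhs => rw [show d = (d-1)+1 by omega]
    rw [pow_succ]
    ring
  have hA : (0:ℤ) < 4^(d-1) := by positivity
  have hdb : ((d-1:ℕ):ℤ) = (d:ℤ) - 1 := by omega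
  have s1 : (d:ℤ)^3 * ((d-1).factorial : ℤ)^3 ≤ (d:ℤ)^3 * (4^(d-1) * K (d-1)) :=
    mul_le_mul_of_nonneg_left hIH (by positivity)
  have s2 : (d:ℤ)^3 * (4^(d-1) * K (d-1)) ≤ (2*((d:ℤ)-1)*(d:ℤ)^2) * (4^(d-1) * K (d-1)) := by
    apply mul_le_mul_of_nonneg_right _ (by positivity)
    nlinarith
  have hgrow' : ((d:ℤ)-1) * (d:ℤ)^2 * K (d-1) ≤ 2 * K d := by rw [← hdb]; exact hgrow
  have s4 : 2*(4:ℤ)^(d-1)*(((d:ℤ)-1)*(d:ℤ)^2*K (d-1)) ≤ 2*4^(d-1)*(2*K d) :=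
    mul_le_mul_of_nonneg_left hgrow' (by positivity)
  calc (d.factorial : ℤ)^3 = (d:ℤ)^3 * ((d-1).factorial : ℤ)^3 := by rw [hfac]; ring
    _ ≤ (d:ℤ)^3 * (4^(d-1) * K (d-1)) := s1
    _ ≤ (2*((d:ℤ)-1)*(d:ℤ)^2) * (4^(d-1) * K (d-1)) := s2
    _ = 2*(4:ℤ)^(d-1)*(((d:ℤ)-1)*(d:ℤ)^2*K (d-1)) := by ring
    _ ≤ 2*4^(d-1)*(2*K d) := s4
    _ = 4^d * K d := by rw [hpow]; ring

private lemma log_factorial_ge (n : ℕ) : (n:ℝ) * Real.log n - n ≤ Real.log (n.factorial) := by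
  induction n with
  | zero => simp
  | succ n ih =>
    rcases Nat.eq_zero_or_pos n with rfl | hn
    · norm_num [Nat.factorial]
    · have hn' : (0:ℝ) < n := by exact_mod_cast hn
      have hlog : Real.log ((n:ℝ)+1) - Real.log n ≤ 1/(n:ℝ) := by
        rw [← Real.log_div (by positivity) (by positivity)]
        calc Real.log (((n:ℝ)+1)/n) ≤ ((n:ℝ)+1)/n - 1 :=
              Real.log_le_sub_one_of_pos (by positivity)
          _ = 1/n := by field_simp; ring
      have hfac : (((n+1).factorial : ℕ) : ℝ) = ((n:ℝ)+1) * ((n.factorial : ℕ) : ℝ) := by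
        push_cast [Nat.factorial_succ]
        ring
      rw [hfac, Real.log_mul (by positivity) (by positivity)]
      push_cast
      have h2 : (n:ℝ) * (Real.log ((n:ℝ)+1) - Real.log n) ≤ 1 := by
        calc (n:ℝ) * (Real.log ((n:ℝ)+1) - Real.log n) ≤ (n:ℝ) * (1/n) :=
              mul_le_mul_of_nonneg_left hlog (by positivity)
          _ = 1 := by field_simp
      nlinarith [ih, h2]

/-- If `K : ℕ → ℤ` is the sequence of Kontsevich numbers, then there
is a constant `C > 0` with `log (K n) ≥ 3 n log n - C n` for all `n ≥ 1`. -/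
theorem kontsevich_log_lower_bound
    (K : ℕ → ℤ)
    (hK1 : K 1 = 1)
    (hKrec : ∀ d : ℕ, 2 ≤ d →
      K d = ∑ d₁ ∈ Finset.Ioo 0 d,
        K d₁ * K (d - d₁) *
          ((d₁ : ℤ)^2 * ((d - d₁ : ℕ) : ℤ)^2 * (Nat.choose (3*d - 4) (3*d₁ - 2) : ℤ)
            - (d₁ : ℤ)^3 * ((d - d₁ : ℕ) : ℤ) * (Nat.choose (3*d - 4) (3*d₁ - 1) : ℤ))) :
    ∃ C : ℝ, 0 < C ∧ ∀ n : ℕ, 1 ≤ n →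
      3 * n * Real.log n - C * n ≤ Real.log (K n) := by
  refine ⟨5, by norm_num, ?_⟩
  intro n hn
  obtain ⟨hpos, hfb⟩ := kontsevich_pos_fact K hK1 hKrec n hn
  have hposR : (0:ℝ) < (K n : ℝ) := by exact_mod_cast hpos
  have hfbR : ((n.factorial : ℕ) : ℝ)^3 ≤ 4^n * (K n : ℝ) := by exact_mod_cast hfb
  have hfacpos : (0:ℝ) < ((n.factorial : ℕ) : ℝ) := by
    exact_mod_cast Nat.factorial_pos n
  have hdiv : ((n.factorial : ℕ) : ℝ)^3 / 4^n ≤ (K n : ℝ) := by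
    rw [div_le_iff₀ (by positivity)]
    linarith [hfbR]
  have hlogle : Real.log (((n.factorial : ℕ) : ℝ)^3 / 4^n) ≤ Real.log (K n : ℝ) :=
    Real.log_le_log (by positivity) hdiv
  have hsplit : Real.log (((n.factorial : ℕ) : ℝ)^3 / 4^n)
      = 3 * Real.log ((n.factorial : ℕ) : ℝ) - n * Real.log 4 := by
    rw [Real.log_div (by positivity) (by positivity), Real.log_pow, Real.log_pow]
    push_cast
    ring
  have hlf := log_factorial_ge n
  have hlog4 : Real.log 4 ≤ 2 := by
    have h2 : Real.log 4 = 2 * Real.log 2 := by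
      rw [show (4:ℝ) = 2^2 by norm_num, Real.log_pow]
      push_cast; ring
    have := Real.log_two_lt_d9
    nlinarith
  have hn0 : (0:ℝ) ≤ (n:ℝ) := by positivity
  have h4 : (n:ℝ) * Real.log 4 ≤ (n:ℝ) * 2 := mul_le_mul_of_nonneg_left hlog4 hn0
  nlinarith [hlogle, hsplit, hlf, h4]
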